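/- Identify ℂ² ⊗ ℂ⁴ with ℂ⁸ via the Kronecker ordering (e_{4a+b} = |a⟩⊗|b⟩ for a ∈ {0,1}, b ∈ {0,1,2,3}). Let Π be the orthogonal projection of ℂ⁸ onto the span of h₀ = (e₀ + e₇)/√2 and h₁ = (e₂ + e₅)/√2. Then for every 2×2 complex matrix A there exists c ∈ ℂ such that Π (A ⊗ I₄) Π = c Π; i.e., the qubit–ququart heterogeneous code detects every error supported on the qubit. -/

import Mathlib

/-- Kronecker product of a `2×2` and a `4×4` matrix realized on `ℂ⁸` via
`e_{4a+b} = |a⟩⊗|b⟩`. -/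
noncomputable def kron24 (A : Matrix (Fin 2) (Fin 2) ℂ) (B : Matrix (Fin 4) (Fin 4) ℂ) :
    Matrix (Fin 8) (Fin 8) ℂ :=
  Matrix.of fun r c =>
    A ⟨(r : ℕ) / 4, by have := r.isLt; omega⟩ ⟨(c : ℕ) / 4, by have := c.isLt; omega⟩ *
    B ⟨(r : ℕ) % 4, by omega⟩ ⟨(c : ℕ) % 4, by omega⟩

/-- The codeword `h₀ = (|00⟩ + |13⟩)/√2 = (e₀ + e₇)/√2`. -/
noncomputable def h0 : Fin 8 → ℂ :=
  (Real.sqrt 2 : ℂ)⁻¹ • (Pi.single (0 : Fin 8) (1 : ℂ) + Pi.single (7 : Fin 8) (1 : ℂ))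

/-- The codeword `h₁ = (|02⟩ + |11⟩)/√2 = (e₂ + e₅)/√2`. -/
noncomputable def h1 : Fin 8 → ℂ :=
  (Real.sqrt 2 : ℂ)⁻¹ • (Pi.single (2 : Fin 8) (1 : ℂ) + Pi.single (5 : Fin 8) (1 : ℂ))

/-- The explicit orthogonal projection onto `span{h0, h1}`. -/
noncomputable def Pmat : Matrix (Fin 8) (Fin 8) ℂ :=
  Matrix.of fun i j =>
    if (i = 0 ∧ j = 0) ∨ (i = 0 ∧ j = 7) ∨ (i = 7 ∧ j = 0) ∨ (i = 7 ∧ j = 7) ∨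
       (i = 2 ∧ j = 2) ∨ (i = 2 ∧ j = 5) ∨ (i = 5 ∧ j = 2) ∨ (i = 5 ∧ j = 5)
    then (1 / 2 : ℂ) else 0

lemma sqrt2_inv_sq : ((Real.sqrt 2 : ℝ) : ℂ)⁻¹ * ((Real.sqrt 2 : ℝ) : ℂ)⁻¹ = 1 / 2 := by
  rw [← mul_inv, ← Complex.ofReal_mul, Real.mul_self_sqrt (by norm_num)]
  norm_num

lemma ext_of_mulVec {M N : Matrix (Fin 8) (Fin 8) ℂ}
    (h : ∀ v, M.mulVec v = N.mulVec v) : M = N := by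
  ext i j
  have := congrFun (h (Pi.single j 1)) i
  simpa [Matrix.mulVec_single] using this

lemma Pmat_mulVec (v : Fin 8 → ℂ) :
    Pmat.mulVec v =
      (((Real.sqrt 2 : ℝ) : ℂ)⁻¹ * (v 0 + v 7)) • h0 +
      (((Real.sqrt 2 : ℝ) : ℂ)⁻¹ * (v 2 + v 5)) • h1 := by
  have hinv := sqrt2_inv_sq
  funext i
  fin_cases i <;>
    simp (config := { decide := true }) [Pmat, Matrix.mulVec, dotProduct,
      Fin.sum_univ_eight, h0, h1, Pi.single_apply, Fin.ext_iff, -Fin.val_eq_zero_iff] <;>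
    first
      | linear_combination (-(v 0 + v 7)) * hinv
      | linear_combination (-(v 2 + v 5)) * hinv

lemma Pmat_mulVec_mem (v : Fin 8 → ℂ) :
    Pmat.mulVec v ∈ Submodule.span ℂ {h0, h1} := by
  rw [Pmat_mulVec]
  exact Submodule.add_mem _
    (Submodule.smul_mem _ _ (Submodule.subset_span (by simp)))
    (Submodule.smul_mem _ _ (Submodule.subset_span (by simp)))

lemma Pmat_h0 : Pmat.mulVec h0 = h0 := by
  funext i
  fin_cases i <;>
    simp (config := { decide := true }) [Pmat, Matrix.mulVec, dotProduct,
      Fin.sum_univ_eight, h0, Pi.single_apply, Fin.ext_iff, -Fin.val_eq_zero_iff] <;>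
      first
        | ring1
        | exact mul_comm _ _

lemma Pmat_h1 : Pmat.mulVec h1 = h1 := by
  funext i
  fin_cases i <;>
    simp (config := { decide := true }) [Pmat, Matrix.mulVec, dotProduct,
      Fin.sum_univ_eight, h1, Pi.single_apply, Fin.ext_iff, -Fin.val_eq_zero_iff] <;>
      first
        | ring1
        | exact mul_comm _ _

lemma Pmat_fix_span {w : Fin 8 → ℂ} (hw : w ∈ Submodule.span ℂ {h0, h1}) :
    Pmat.mulVec w = w := by
  rcases Submodule.mem_span_pair.mp hw with ⟨a, b, rfl⟩
  simp [Matrix.mulVec_add, Matrix.mulVec_smul, Pmat_h0, Pmat_h1]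

lemma Pmat_herm : Pmat.conjTranspose = Pmat := by
  ext i j
  fin_cases i <;> fin_cases j <;> simp [Pmat, Matrix.conjTranspose_apply]

/-- The qubit–ququart heterogeneous code spanned by `h₀, h₁` detects every error
supported on the qubit: for every `2×2` matrix `A` there is `c ∈ ℂ` with
`Π (A ⊗ I₄) Π = c Π`.  Here `Pr` is the orthogonal projection of `ℂ⁸` onto
`span{h₀, h₁}`. -/
theorem qubit_ququart_code_detects_qubit_errors
    (Pr : Matrix (Fin 8) (Fin 8) ℂ)
    (hsa : Pr.IsHermitian) (hidem : Pr * Pr = Pr)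
    (hrange : LinearMap.range Pr.mulVecLin = Submodule.span ℂ {h0, h1}) :
    ∀ A : Matrix (Fin 2) (Fin 2) ℂ, ∃ c : ℂ, Pr * kron24 A 1 * Pr = c • Pr := by
  have hfix : ∀ w ∈ LinearMap.range Pr.mulVecLin, Pr.mulVec w = w := by
    rintro w ⟨v, rfl⟩
    simp only [Matrix.mulVecLin_apply]
    rw [Matrix.mulVec_mulVec, hidem]
  have hPrP : Pr * Pmat = Pmat := by
    apply ext_of_mulVec
    intro v
    rw [← Matrix.mulVec_mulVec]
    exact hfix _ (by rw [hrange]; exact Pmat_mulVec_mem v)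
  have hPPr : Pmat * Pr = Pr := by
    apply ext_of_mulVec
    intro v
    rw [← Matrix.mulVec_mulVec]
    exact Pmat_fix_span (by rw [← hrange]; exact ⟨v, rfl⟩)
  have hPrEq : Pr = Pmat := by
    have h := congrArg Matrix.conjTranspose hPrP
    rwa [Matrix.conjTranspose_mul, hsa.eq, Pmat_herm, hPPr] at h
  intro A
  refine ⟨(A 0 0 + A 1 1) / 2, ?_⟩
  have hinv := sqrt2_inv_sq
  have e00 : ((kron24 A 1).mulVec h0) 0 = ((Real.sqrt 2 : ℝ) : ℂ)⁻¹ * A 0 0 := by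
    simp (config := { decide := true }) [kron24, Matrix.mulVec, dotProduct,
      Fin.sum_univ_eight, h0, Matrix.one_apply, Pi.single_apply, Fin.ext_iff, -Fin.val_eq_zero_iff] <;>
      first
        | ring1
        | exact mul_comm _ _
  have e07 : ((kron24 A 1).mulVec h0) 7 = ((Real.sqrt 2 : ℝ) : ℂ)⁻¹ * A 1 1 := by
    simp (config := { decide := true }) [kron24, Matrix.mulVec, dotProduct,
      Fin.sum_univ_eight, h0, Matrix.one_apply, Pi.single_apply, Fin.ext_iff, -Fin.val_eq_zero_iff] <;>
      first
        | ring1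
        | exact mul_comm _ _
  have e02 : ((kron24 A 1).mulVec h0) 2 = 0 := by
    simp (config := { decide := true }) [kron24, Matrix.mulVec, dotProduct,
      Fin.sum_univ_eight, h0, Matrix.one_apply, Pi.single_apply, Fin.ext_iff, -Fin.val_eq_zero_iff] <;>
      first
        | ring1
        | exact mul_comm _ _
  have e05 : ((kron24 A 1).mulVec h0) 5 = 0 := by
    simp (config := { decide := true }) [kron24, Matrix.mulVec, dotProduct,
      Fin.sum_univ_eight, h0, Matrix.one_apply, Pi.single_apply, Fin.ext_iff, -Fin.val_eq_zero_iff] <;>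
      first
        | ring1
        | exact mul_comm _ _
  have e10 : ((kron24 A 1).mulVec h1) 0 = 0 := by
    simp (config := { decide := true }) [kron24, Matrix.mulVec, dotProduct,
      Fin.sum_univ_eight, h1, Matrix.one_apply, Pi.single_apply, Fin.ext_iff, -Fin.val_eq_zero_iff] <;>
      first
        | ring1
        | exact mul_comm _ _
  have e17 : ((kron24 A 1).mulVec h1) 7 = 0 := by
    simp (config := { decide := true }) [kron24, Matrix.mulVec, dotProduct,
      Fin.sum_univ_eight, h1, Matrix.one_apply, Pi.single_apply, Fin.ext_iff, -Fin.val_eq_zero_iff] <;>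
      first
        | ring1
        | exact mul_comm _ _
  have e12 : ((kron24 A 1).mulVec h1) 2 = ((Real.sqrt 2 : ℝ) : ℂ)⁻¹ * A 0 0 := by
    simp (config := { decide := true }) [kron24, Matrix.mulVec, dotProduct,
      Fin.sum_univ_eight, h1, Matrix.one_apply, Pi.single_apply, Fin.ext_iff, -Fin.val_eq_zero_iff] <;>
      first
        | ring1
        | exact mul_comm _ _
  have e15 : ((kron24 A 1).mulVec h1) 5 = ((Real.sqrt 2 : ℝ) : ℂ)⁻¹ * A 1 1 := by
    simp (config := { decide := true }) [kron24, Matrix.mulVec, dotProduct,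
      Fin.sum_univ_eight, h1, Matrix.one_apply, Pi.single_apply, Fin.ext_iff, -Fin.val_eq_zero_iff] <;>
      first
        | ring1
        | exact mul_comm _ _
  have key0 : Pmat.mulVec ((kron24 A 1).mulVec h0) = ((A 0 0 + A 1 1) / 2) • h0 := by
    rw [Pmat_mulVec, e00, e07, e02, e05]
    have hs : ((Real.sqrt 2 : ℝ) : ℂ)⁻¹ *
        (((Real.sqrt 2 : ℝ) : ℂ)⁻¹ * A 0 0 + ((Real.sqrt 2 : ℝ) : ℂ)⁻¹ * A 1 1) = (A 0 0 + A 1 1) / 2 := by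
      linear_combination (A 0 0 + A 1 1) * hinv
    rw [hs]
    simp
  have key1 : Pmat.mulVec ((kron24 A 1).mulVec h1) = ((A 0 0 + A 1 1) / 2) • h1 := by
    rw [Pmat_mulVec, e10, e17, e12, e15]
    have hs : ((Real.sqrt 2 : ℝ) : ℂ)⁻¹ *
        (((Real.sqrt 2 : ℝ) : ℂ)⁻¹ * A 0 0 + ((Real.sqrt 2 : ℝ) : ℂ)⁻¹ * A 1 1) = (A 0 0 + A 1 1) / 2 := by
      linear_combination (A 0 0 + A 1 1) * hinv
    rw [hs]
    simp
  rw [hPrEq]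
  apply ext_of_mulVec
  intro v
  rw [← Matrix.mulVec_mulVec, ← Matrix.mulVec_mulVec, Pmat_mulVec v,
    Matrix.mulVec_add, Matrix.mulVec_smul, Matrix.mulVec_smul,
    Matrix.mulVec_add, Matrix.mulVec_smul, Matrix.mulVec_smul, key0, key1,
    Matrix.smul_mulVec, Pmat_mulVec v]
  rw [smul_add]
  rw [smul_smul, smul_smul, smul_smul, smul_smul]
  ring_nf
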